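/- Let d_{a,i} denote the coefficient of q^i in the Gaussian binomial coefficient (a+4 choose 4)_q. Then for every a ≥ 2, the coefficients in degrees 2a-1 and 2a-2 are equal: d_{a,2a-1} = d_{a,2a-2}. -/

import Mathlib

/-- `μ` is a partition with distinct parts (strictly decreasing positive parts,
followed by a tail of zeros), encoded as a function `Fin b → ℕ`. -/
def DistinctParts {b : ℕ} (μ : Fin b → ℕ) : Prop :=
  ∀ i j : Fin b, i < j → μ j = 0 ∨ μ j < μ i

/-- `μ` is a partition with distinct parts contained inside the shifted shape `lam`. -/
def FitsD {b : ℕ} (lam μ : Fin b → ℕ) : Prop :=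
  DistinctParts μ ∧ ∀ i, μ i ≤ lam i

/-- The coefficient of `q^k` in the rank-generating function `F_lam`:
the number of partitions with distinct parts of size `k` contained inside `lam`. -/
noncomputable def Fcoeff {b : ℕ} (lam : Fin b → ℕ) (k : ℕ) : ℕ :=
  Nat.card {μ : Fin b → ℕ // FitsD lam μ ∧ ∑ i, μ i = k}

/-- The coefficient of `q^k` in the rank-generating function `G_lam` of arbitrary
partitions contained inside the straight Ferrers shape `lam`. -/
noncomputable def Gcoeff {b : ℕ} (lam : Fin b → ℕ) (k : ℕ) : ℕ :=
  Nat.card {μ : Fin b → ℕ // Antitone μ ∧ (∀ i, μ i ≤ lam i) ∧ ∑ i, μ i = k}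

/-- The coefficient of `q^i` in the Gaussian binomial coefficient `(m choose k)_q`,
which is the rank-generating function of partitions inside a `k × (m-k)` rectangle. -/
noncomputable def gaussCoeff (m k i : ℕ) : ℕ :=
  Gcoeff (fun _ : Fin k => m - k) i

/-- Difference coordinates for a partition with at most 4 parts:
quadruples `(e,b,c,d)` with `e+2b+3c+4d = n` and `e+b+c+d ≤ a`. -/
def DiffSet (a n : ℕ) : Type :=
  {v : ℕ × ℕ × ℕ × ℕ //
    v.1 + 2 * v.2.1 + 3 * v.2.2.1 + 4 * v.2.2.2 = n ∧
    v.1 + v.2.1 + v.2.2.1 + v.2.2.2 ≤ a}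

/-- Forward map of the key bijection. -/
def Fmap : ℕ × ℕ × ℕ × ℕ → ℕ × ℕ × ℕ × ℕ :=
  fun (e, b, c, d) => if 1 ≤ e then (e - 1, b, c, d) else (c + d + 1, b, d, (c - 1) / 2)

/-- Backward map of the key bijection. -/
def Gmap (a : ℕ) : ℕ × ℕ × ℕ × ℕ → ℕ × ℕ × ℕ × ℕ :=
  fun (e, b, c, d) => if e + b + c + d = a then (0, b, 2 * d + 1, c) else (e + 1, b, c, d)

/-- The key bijection between levels `2a-1` and `2a-2` in difference coordinates. -/
def diffEquiv (a : ℕ) (ha : 2 ≤ a) :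
    DiffSet a (2 * a - 1) ≃ DiffSet a (2 * a - 2) where
  toFun v := ⟨Fmap v.1, by
    obtain ⟨⟨e, b, c, d⟩, hsum, hle⟩ := v
    have hs : e + 2 * b + 3 * c + 4 * d = 2 * a - 1 := hsum
    have hl : e + b + c + d ≤ a := hle
    simp only [Fmap]
    split_ifs with h <;> constructor <;> simp <;> omega⟩
  invFun v := ⟨Gmap a v.1, by
    obtain ⟨⟨e, b, c, d⟩, hsum, hle⟩ := v
    have hs : e + 2 * b + 3 * c + 4 * d = 2 * a - 2 := hsum
    have hl : e + b + c + d ≤ a := hle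
    simp only [Gmap]
    split_ifs with h <;> constructor <;> simp <;> omega⟩
  left_inv := by
    rintro ⟨⟨e, b, c, d⟩, hsum, hle⟩
    have hs : e + 2 * b + 3 * c + 4 * d = 2 * a - 1 := hsum
    have hl : e + b + c + d ≤ a := hle
    apply Subtype.ext
    show Gmap a (Fmap (e, b, c, d)) = (e, b, c, d)
    simp only [Fmap, Gmap]
    split_ifs with h h1 h2 <;> simp_all [Prod.ext_iff] <;> omega
  right_inv := by
    rintro ⟨⟨e, b, c, d⟩, hsum, hle⟩
    have hs : e + 2 * b + 3 * c + 4 * d = 2 * a - 2 := hsum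
    have hl : e + b + c + d ≤ a := hle
    apply Subtype.ext
    show Fmap (Gmap a (e, b, c, d)) = (e, b, c, d)
    simp only [Fmap, Gmap]
    split_ifs with h h1 h2 <;> simp_all [Prod.ext_iff] <;> omega

lemma antitone_of_four {w x y z : ℕ} (h1 : x ≤ w) (h2 : y ≤ x) (h3 : z ≤ y) :
    Antitone ![w, x, y, z] := by
  intro i j hij
  fin_cases i <;> fin_cases j <;> simp_all [Fin.le_def] <;> omega

/-- Partitions in a `4 × a` box with sum `n` biject with difference coordinates. -/
noncomputable def partEquivDiff (a n : ℕ) :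
    {μ : Fin 4 → ℕ // Antitone μ ∧ (∀ i, μ i ≤ a) ∧ ∑ i, μ i = n} ≃ DiffSet a n where
  toFun μ := ⟨(μ.1 0 - μ.1 1, μ.1 1 - μ.1 2, μ.1 2 - μ.1 3, μ.1 3), by
    obtain ⟨μ, hμ, hle, hsum⟩ := μ
    have h01 : μ 1 ≤ μ 0 := hμ (by decide : (0 : Fin 4) ≤ 1)
    have h12 : μ 2 ≤ μ 1 := hμ (by decide : (1 : Fin 4) ≤ 2)
    have h23 : μ 3 ≤ μ 2 := hμ (by decide : (2 : Fin 4) ≤ 3)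
    have h0 : μ 0 ≤ a := hle 0
    rw [Fin.sum_univ_four] at hsum
    constructor
    · show μ 0 - μ 1 + 2 * (μ 1 - μ 2) + 3 * (μ 2 - μ 3) + 4 * μ 3 = n
      omega
    · show μ 0 - μ 1 + (μ 1 - μ 2) + (μ 2 - μ 3) + μ 3 ≤ a
      omega⟩
  invFun v := ⟨![v.1.1 + v.1.2.1 + v.1.2.2.1 + v.1.2.2.2,
                 v.1.2.1 + v.1.2.2.1 + v.1.2.2.2,
                 v.1.2.2.1 + v.1.2.2.2, v.1.2.2.2], by
    obtain ⟨⟨e, b, c, d⟩, hsum, hle⟩ := v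
    have hs : e + 2 * b + 3 * c + 4 * d = n := hsum
    have hl : e + b + c + d ≤ a := hle
    refine ⟨antitone_of_four (by omega) (by omega) (by omega), ?_, ?_⟩
    · intro i
      fin_cases i <;> simp <;> omega
    · rw [Fin.sum_univ_four]
      simp
      omega⟩
  left_inv := by
    rintro ⟨μ, hμ, hle, hsum⟩
    have h01 : μ 1 ≤ μ 0 := hμ (by decide : (0 : Fin 4) ≤ 1)
    have h12 : μ 2 ≤ μ 1 := hμ (by decide : (1 : Fin 4) ≤ 2)
    have h23 : μ 3 ≤ μ 2 := hμ (by decide : (2 : Fin 4) ≤ 3)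
    apply Subtype.ext
    funext i
    fin_cases i <;> simp <;> omega
  right_inv := by
    rintro ⟨⟨e, b, c, d⟩, hsum, hle⟩
    apply Subtype.ext
    simp only [Prod.mk.injEq]
    norm_num
    dsimp only [Matrix.cons_val] at hsum hle ⊢
    omega

/-- For `a ≥ 2`, the coefficients of `(a+4 choose 4)_q` in degrees `2a-1` and `2a-2`
are equal. -/
theorem gauss_binomial_flat_step (a : ℕ) (ha : 2 ≤ a) :
    gaussCoeff (a + 4) 4 (2 * a - 1) = gaussCoeff (a + 4) 4 (2 * a - 2) := by
  have hs : a + 4 - 4 = a := by omega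
  unfold gaussCoeff Gcoeff
  rw [hs]
  exact Nat.card_congr ((partEquivDiff a (2 * a - 1)).trans
    ((diffEquiv a ha).trans (partEquivDiff a (2 * a - 2)).symm))
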